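/- Let n be a positive integer and define λ(n) = lcm over primes p dividing n of (p-1). Let k = λ(n)/gcd(λ(n), n-1). For each prime p ∣ n let d_n(p) = (p-1)² if gcd(n-1,p-1)² > gcd(n-1,p²-1), and d_n(p) = p²-1 otherwise. Then k · ∏_{p ∣ n} max(gcd(n-1,p²-1), gcd(n-1,p-1)²) divides ∏_{p ∣ n} d_n(p). -/

import Mathlib

lemma key_stmt4 (a b m : ℕ) (ha : a ≠ 0) (hb : b ≠ 0) (hm : m ≠ 0) :
    Nat.lcm a b / Nat.gcd (Nat.lcm a b) m ∣ (a / Nat.gcd a m) * (b / Nat.gcd b m) := by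
  have hl : Nat.lcm a b ≠ 0 := Nat.lcm_ne_zero ha hb
  have ha2 : a / Nat.gcd a m ≠ 0 :=
    (Nat.div_ne_zero_iff_of_dvd (Nat.gcd_dvd_left a m)).mpr ⟨ha, Nat.gcd_ne_zero_left ha⟩
  have hb2 : b / Nat.gcd b m ≠ 0 :=
    (Nat.div_ne_zero_iff_of_dvd (Nat.gcd_dvd_left b m)).mpr ⟨hb, Nat.gcd_ne_zero_left hb⟩
  have h1 : Nat.lcm a b / Nat.gcd (Nat.lcm a b) m ≠ 0 :=
    (Nat.div_ne_zero_iff_of_dvd (Nat.gcd_dvd_left _ m)).mpr ⟨hl, Nat.gcd_ne_zero_left hl⟩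
  rw [← Nat.factorization_le_iff_dvd h1 (Nat.mul_ne_zero ha2 hb2)]
  rw [Nat.factorization_mul ha2 hb2,
    Nat.factorization_div (Nat.gcd_dvd_left _ m),
    Nat.factorization_div (Nat.gcd_dvd_left a m),
    Nat.factorization_div (Nat.gcd_dvd_left b m),
    Nat.factorization_gcd hl hm, Nat.factorization_gcd ha hm, Nat.factorization_gcd hb hm,
    Nat.factorization_lcm ha hb]
  intro p
  simp only [Finsupp.coe_tsub, Pi.sub_apply, Finsupp.sup_apply, Finsupp.inf_apply,
    Finsupp.coe_add, Pi.add_apply]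
  omega

lemma key2_stmt4 (s : Finset ℕ) (f : ℕ → ℕ) (m : ℕ) (hm : m ≠ 0) (hf : ∀ p ∈ s, f p ≠ 0) :
    s.lcm f / Nat.gcd (s.lcm f) m ∣ ∏ p ∈ s, (f p / Nat.gcd (f p) m) := by
  classical
  induction s using Finset.induction with
  | empty => simp [Nat.gcd_one_left]
  | @insert a s hx ih =>
    have hfa : f a ≠ 0 := hf a (Finset.mem_insert_self a s)
    have hL : s.lcm f ≠ 0 := by
      simp only [Ne, Finset.lcm_eq_zero_iff, Set.mem_image]
      rintro ⟨x, hx', hx0⟩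
      exact hf x (Finset.mem_insert_of_mem hx') hx0
    rw [Finset.lcm_insert, Finset.prod_insert hx]
    calc lcm (f a) (s.lcm f) / Nat.gcd (lcm (f a) (s.lcm f)) m
        ∣ (f a / Nat.gcd (f a) m) * (s.lcm f / Nat.gcd (s.lcm f) m) :=
          key_stmt4 (f a) (s.lcm f) m hfa hL hm
      _ ∣ (f a / Nat.gcd (f a) m) * ∏ p ∈ s, (f p / Nat.gcd (f p) m) :=
          mul_dvd_mul_left _ (ih fun p hp => hf p (Finset.mem_insert_of_mem hp))

lemma key3_stmt4 (m p : ℕ) (hp : p.Prime) :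
    (max (Nat.gcd m (p ^ 2 - 1)) (Nat.gcd m (p - 1) ^ 2)) * ((p - 1) / Nat.gcd (p - 1) m) ∣
      (if Nat.gcd m (p - 1) ^ 2 > Nat.gcd m (p ^ 2 - 1) then (p - 1) ^ 2 else p ^ 2 - 1) := by
  have hp1 : 1 ≤ p := hp.one_lt.le
  have hp2 : p ^ 2 - 1 = (p - 1) * (p + 1) := by
    have h2 : 1 ≤ p ^ 2 := Nat.one_le_pow _ _ hp.pos
    zify [hp1, h2]; ring
  set g := Nat.gcd m (p - 1) with hg
  have hgc : Nat.gcd (p - 1) m = g := Nat.gcd_comm _ _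
  have hgd : g ∣ p - 1 := Nat.gcd_dvd_right m (p - 1)
  have hmul : g * ((p - 1) / g) = p - 1 := Nat.mul_div_cancel' hgd
  split_ifs with h
  · rw [max_eq_right h.le, pow_two, mul_assoc, hgc, hmul, pow_two]
    exact mul_dvd_mul hgd dvd_rfl
  · rw [max_eq_left (not_lt.mp h), hgc]
    have hG : Nat.gcd m (p ^ 2 - 1) ∣ g * (p + 1) := by
      rw [hp2]
      exact (Nat.gcd_mul_right_dvd_mul_gcd m (p - 1) (p + 1)).trans
        (mul_dvd_mul_left g (Nat.gcd_dvd_right m (p + 1)))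
    have heq : (g * (p + 1)) * ((p - 1) / g) = p ^ 2 - 1 := by
      rw [mul_right_comm, hmul, hp2]
    exact (mul_dvd_mul_right hG _).trans heq.dvd

theorem stmt_4 (n : ℕ) (hn : 1 < n)
    (lam : ℕ) (hlam : lam = n.primeFactors.lcm (fun p => p - 1))
    (k : ℕ) (hk : k = lam / Nat.gcd lam (n - 1))
    (d : ℕ → ℕ)
    (hd : ∀ p, d p = if Nat.gcd (n - 1) (p - 1) ^ 2 > Nat.gcd (n - 1) (p ^ 2 - 1)
        then (p - 1) ^ 2 else p ^ 2 - 1) :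
    k * ∏ p ∈ n.primeFactors, max (Nat.gcd (n - 1) (p ^ 2 - 1)) (Nat.gcd (n - 1) (p - 1) ^ 2) ∣
      ∏ p ∈ n.primeFactors, d p := by
  have hm : n - 1 ≠ 0 := by omega
  have hk' : k ∣ ∏ p ∈ n.primeFactors, ((p - 1) / Nat.gcd (p - 1) (n - 1)) := by
    rw [hk, hlam]
    exact key2_stmt4 _ _ _ hm fun p hp => by
      have := (Nat.prime_of_mem_primeFactors hp).one_lt; omega
  calc k * ∏ p ∈ n.primeFactors,
        max (Nat.gcd (n - 1) (p ^ 2 - 1)) (Nat.gcd (n - 1) (p - 1) ^ 2)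
      ∣ (∏ p ∈ n.primeFactors, ((p - 1) / Nat.gcd (p - 1) (n - 1))) *
        ∏ p ∈ n.primeFactors,
          max (Nat.gcd (n - 1) (p ^ 2 - 1)) (Nat.gcd (n - 1) (p - 1) ^ 2) :=
        mul_dvd_mul_right hk' _
    _ = ∏ p ∈ n.primeFactors,
        (max (Nat.gcd (n - 1) (p ^ 2 - 1)) (Nat.gcd (n - 1) (p - 1) ^ 2) *
          ((p - 1) / Nat.gcd (p - 1) (n - 1))) := by
        rw [Finset.prod_mul_distrib, mul_comm]
    _ ∣ ∏ p ∈ n.primeFactors, d p := by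
        refine Finset.prod_dvd_prod_of_dvd _ _ fun p hp => ?_
        rw [hd p]
        exact key3_stmt4 (n - 1) p (Nat.prime_of_mem_primeFactors hp)
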